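/- For every integer n ≥ 1, there exists a family C of 2-faces of the n-cube Q_n such that every edge (1-face) of Q_n is contained in exactly one member of C — i.e., the edge set of the hypercube graph Q_n partitions into 4-cycles bounding 2-faces — if and only if n is even. -/

import Mathlib

/-- A `d`-face of the `n`-cube: a function `Fin n → Option Bool` with exactly `d`
coordinates equal to `none` (the free coordinates). -/
def IsCubeFace (n d : ℕ) (f : Fin n → Option Bool) : Prop :=
  (Finset.univ.filter fun i => f i = none).card = d

/-- A face `f` is contained in a face `g` iff every coordinate fixed by `g` is
fixed to the same value by `f`. -/
def FaceContained {n : ℕ} (f g : Fin n → Option Bool) : Prop :=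
  ∀ (i : Fin n) (b : Bool), g i = some b → f i = some b

/-- The partner of a coordinate: pair `2k` with `2k+1`. Needs `n` even. -/
def cubePair {n : ℕ} (hn : n % 2 = 0) (i : Fin n) : Fin n :=
  if h : i.val % 2 = 0 then ⟨i.val + 1, by have := i.isLt; omega⟩
  else ⟨i.val - 1, by have := i.isLt; omega⟩

lemma cubePair_ne {n : ℕ} (hn : n % 2 = 0) (i : Fin n) : cubePair hn i ≠ i := by
  unfold cubePair
  split_ifs with h <;> intro hc <;>
    (have := congrArg Fin.val hc; simp only [] at this; omega)

lemma cubePair_invol {n : ℕ} (hn : n % 2 = 0) (i : Fin n) :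
    cubePair hn (cubePair hn i) = i := by
  unfold cubePair
  by_cases h : i.val % 2 = 0
  · rw [dif_pos h, dif_neg (by simp; omega)]
    apply Fin.ext; simp
  · rw [dif_neg h, dif_pos (by simp; omega)]
    apply Fin.ext; simp; omega

theorem cube_one_skeleton_factorization (n : ℕ) (hn : 1 ≤ n) :
    (∃ C : Finset (Fin n → Option Bool),
      (∀ g ∈ C, IsCubeFace n 2 g) ∧
      ∀ f : Fin n → Option Bool, IsCubeFace n 1 f → ∃! g, g ∈ C ∧ FaceContained f g) ↔
      Even n := by
  classical
  constructor
  · rintro ⟨C, hC2, hCov⟩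
    -- edges at the all-false vertex
    set e : Fin n → (Fin n → Option Bool) := fun i j => if j = i then none else some false
      with he_def
    have he : ∀ i, IsCubeFace n 1 (e i) := by
      intro i
      have : (Finset.univ.filter fun j => e i j = none) = {i} := by
        ext j
        by_cases h : j = i <;> simp [he_def, h]
      simp [IsCubeFace, this]
    set h : Fin n → (Fin n → Option Bool) := fun i => (hCov (e i) (he i)).choose with hh_def
    have hhC : ∀ i, h i ∈ C := fun i => ((hCov (e i) (he i)).choose_spec).1.1
    have hhF : ∀ i, FaceContained (e i) (h i) :=
      fun i => ((hCov (e i) (he i)).choose_spec).1.2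
    have hhU : ∀ i g, g ∈ C → FaceContained (e i) g → g = h i :=
      fun i g hg hf => ((hCov (e i) (he i)).choose_spec).2 g ⟨hg, hf⟩
    -- fixed values of h i are all false
    have hfalse : ∀ i k b, h i k = some b → b = false := by
      intro i k b hk
      have := hhF i k b hk
      by_cases hki : k = i
      · simp [he_def, hki] at this
      · simp [he_def, hki] at this; exact this
    have key : ∀ i j, h i j = none ↔ h j = h i := by
      intro i j
      constructor
      · intro hnone
        refine (hhU j (h i) (hhC i) ?_).symm
        intro k b hk
        have hb : b = false := hfalse i k b hk
        have hkj : k ≠ j := by rintro rfl; rw [hnone] at hk; cases hk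
        simp [he_def, hkj, hb]
      · intro heq
        by_contra hne
        obtain ⟨b, hb⟩ := Option.ne_none_iff_exists'.mp hne
        have := hhF j j b (heq ▸ hb)
        simp [he_def] at this
    -- counting
    have hcard : n = ∑ g ∈ Finset.univ.image h, (Finset.univ.filter fun i => h i = g).card := by
      simpa using (Finset.card_eq_sum_card_image h Finset.univ)
    have hterm : ∀ g ∈ Finset.univ.image h,
        (Finset.univ.filter fun i => h i = g).card = 2 := by
      intro g hg
      obtain ⟨i, _, rfl⟩ := Finset.mem_image.mp hg
      have : (Finset.univ.filter fun j => h j = h i)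
          = (Finset.univ.filter fun j => h i j = none) := by
        ext j; simp [key i j]
      rw [this]
      exact hC2 (h i) (hhC i)
    rw [Finset.sum_congr rfl hterm] at hcard
    simp at hcard
    exact ⟨(Finset.univ.image h).card, by omega⟩
  · intro hne
    have hn2 : n % 2 = 0 := Nat.even_iff.mp hne
    refine ⟨Finset.univ.filter (fun g => IsCubeFace n 2 g ∧
      ∀ i, g i = none → g (cubePair hn2 i) = none), ?_, ?_⟩
    · intro g hg
      exact ((Finset.mem_filter.mp hg).2).1
    · intro f hf
      obtain ⟨i₀, hi₀⟩ := Finset.card_eq_one.mp hf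
      have hfree : ∀ j, f j = none ↔ j = i₀ := by
        intro j
        have := Finset.ext_iff.mp hi₀ j
        exact (by simpa using this : f j = none ↔ j = i₀)
      set p := cubePair hn2 i₀ with hp_def
      have hpne : p ≠ i₀ := cubePair_ne hn2 i₀
      set g : Fin n → Option Bool := fun j => if j = i₀ ∨ j = p then none else f j with hg_def
      have hgnone : ∀ j, g j = none ↔ (j = i₀ ∨ j = p) := by
        intro j
        constructor
        · intro hj
          by_contra hc
          rw [hg_def] at hj; simp only [hc, if_false] at hj
          push_neg at hc
          exact hc.1 ((hfree j).mp hj)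
        · intro hj; simp [hg_def, hj]
      have hgC : IsCubeFace n 2 g := by
        have : (Finset.univ.filter fun j => g j = none) = {i₀, p} := by
          ext j; simp [hgnone j]
        rw [IsCubeFace, this, Finset.card_insert_of_notMem (by simpa using hpne.symm)]
        simp
      have hclose : ∀ j, g j = none → g (cubePair hn2 j) = none := by
        intro j hj
        rcases (hgnone j).mp hj with rfl | rfl
        · exact (hgnone _).mpr (Or.inr rfl)
        · rw [hp_def, cubePair_invol]
          exact (hgnone _).mpr (Or.inl rfl)
      have hgmem : g ∈ Finset.univ.filter (fun g => IsCubeFace n 2 g ∧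
          ∀ i, g i = none → g (cubePair hn2 i) = none) :=
        Finset.mem_filter.mpr ⟨Finset.mem_univ g, hgC, hclose⟩
      have hgcont : FaceContained f g := by
        intro j b hj
        have hjn : ¬(j = i₀ ∨ j = p) := by
          intro hc
          rw [(hgnone j).mpr hc] at hj; cases hj
        rw [hg_def] at hj; simpa [hjn] using hj
      refine ⟨g, ⟨hgmem, hgcont⟩, ?_⟩
      rintro g' ⟨hg'mem, hg'cont⟩
      obtain ⟨-, hg'2, hg'close⟩ := Finset.mem_filter.mp hg'mem
      have hg'i₀ : g' i₀ = none := by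
        cases hgi : g' i₀ with
        | none => rfl
        | some b =>
          have := hg'cont i₀ b hgi
          rw [(hfree i₀).mpr rfl] at this
          cases this
      have hg'p : g' p = none := hg'close i₀ hg'i₀
      have hsub : ({i₀, p} : Finset (Fin n)) ⊆ Finset.univ.filter fun j => g' j = none := by
        intro j hj
        rcases Finset.mem_insert.mp hj with rfl | hj
        · exact Finset.mem_filter.mpr ⟨Finset.mem_univ _, hg'i₀⟩
        · rw [Finset.mem_singleton.mp hj]
          exact Finset.mem_filter.mpr ⟨Finset.mem_univ _, hg'p⟩
      have hcard2 : ({i₀, p} : Finset (Fin n)).card = 2 := by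
        rw [Finset.card_insert_of_notMem (by simpa using hpne.symm)]; simp
      have heq : (Finset.univ.filter fun j => g' j = none) = {i₀, p} :=
        (Finset.eq_of_subset_of_card_le hsub (by rw [hcard2, hg'2])).symm
      have hg'none : ∀ j, g' j = none ↔ (j = i₀ ∨ j = p) := by
        intro j
        have := Finset.ext_iff.mp heq j
        simpa using this
      funext j
      by_cases hj : j = i₀ ∨ j = p
      · rw [(hg'none j).mpr hj, (hgnone j).mpr hj]
      · have : g' j ≠ none := fun hc => hj ((hg'none j).mp hc)
        obtain ⟨b, hb⟩ := Option.ne_none_iff_exists'.mp this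
        rw [hb, hg_def]
        simp only [hj, if_false]
        exact (hg'cont j b hb).symm
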